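/- arXiv:2512.10083 — 4 statements merged into one kernel-verified Lean document; each statement's English description precedes it below -/
import Mathlib

section
/- Let V_H be a finite-dimensional subspace of H¹₀(D), P_H the L²-orthogonal projection onto V_H, W = ker(P_H) ∩ H¹₀(D), and (·,·)_X an inner product on H¹₀(D) which is equivalent to the H¹-inner product. Define the corrector C : V_H → W by (C v_H, w)_X = (v_H, w)_X for all w ∈ W, and L⁻¹ by (L⁻¹u, v)_X = (u,v)_{L²} for all v ∈ H¹₀(D). Then L⁻¹(V_H) = (I − C)(V_H). -/
/-- Let `VH` be a finite-dimensional subspace of `H` (playing the role of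
`H¹₀(D)`), `PH` the `L²`-orthogonal projection onto `VH`, `W = ker PH` the detail
space, and `aX` an energy inner product on `H`. Let `C : VH → W` be the corrector,
defined by `aX (C vH) w = aX vH w` for all `w ∈ W` with `C vH ∈ W`, and let `Linv` be
the solution operator `aX (Linv z) v = (z,v)_{L²}` for all `v`. Then
`Linv (VH) = (I − C)(VH)`. -/
theorem metric_driven_space_eq_LOD_space
    {H : Type*} [AddCommGroup H] [Module ℝ H]
    (aX b : LinearMap.BilinForm ℝ H)
    (haXsymm : ∀ u v : H, aX u v = aX v u)
    (hbsymm : ∀ u v : H, b u v = b v u)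
    (haXpos : ∀ v : H, v ≠ 0 → 0 < aX v v)
    (hbpos : ∀ v : H, v ≠ 0 → 0 < b v v)
    (VH : Submodule ℝ H) [FiniteDimensional ℝ VH]
    (PH : H →ₗ[ℝ] H)
    (hPHmem : ∀ v : H, PH v ∈ VH)
    (hPHproj : ∀ v : H, ∀ vH ∈ VH, b (v - PH v) vH = 0)
    (C : H → H)
    (hCmem : ∀ vH : H, PH (C vH) = 0)
    (hC : ∀ vH w : H, PH w = 0 → aX (C vH) w = aX vH w)
    (Linv : H → H)
    (hLinv : ∀ z v : H, aX (Linv z) v = b z v) :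
    Linv '' (VH : Set H) = (fun vH => vH - C vH) '' (VH : Set H) := by
  classical
  -- definiteness helpers
  have ext0 : ∀ d : H, aX d d = 0 → d = 0 := by
    intro d hd
    by_contra h
    exact (haXpos d h).ne' hd
  have ext0b : ∀ d : H, b d d = 0 → d = 0 := by
    intro d hd
    by_contra h
    exact (hbpos d h).ne' hd
  have ext_aX : ∀ u u' : H, (∀ v, aX u v = aX u' v) → u = u' := by
    intro u u' h
    have hz : aX (u - u') (u - u') = 0 := by
      simp [map_sub, LinearMap.sub_apply, h]
    exact sub_eq_zero.mp (ext0 _ hz)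
  have ext_W : ∀ u u' : H, PH u = 0 → PH u' = 0 →
      (∀ w, PH w = 0 → aX u w = aX u' w) → u = u' := by
    intro u u' hu hu' h
    have hz : aX (u - u') (u - u') = 0 := by
      simp [map_sub, LinearMap.sub_apply, h u hu, h u' hu']
    exact sub_eq_zero.mp (ext0 _ hz)
  -- PH is the identity on VH
  have hPHid : ∀ v ∈ VH, PH v = v := by
    intro v hv
    have h1 : b (v - PH v) (v - PH v) = 0 :=
      hPHproj v (v - PH v) (VH.sub_mem hv (hPHmem v))
    exact (sub_eq_zero.mp (ext0b _ h1)).symm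
  -- the aX-orthogonal complement of W = ker PH
  set Wp : Submodule ℝ H :=
    { carrier := {u | ∀ w, PH w = 0 → aX u w = 0}
      add_mem' := by
        intro x y hx hy w hw
        simp [map_add, LinearMap.add_apply, hx w hw, hy w hw]
      zero_mem' := by intro w hw; simp
      smul_mem' := by
        intro c x hx w hw
        simp [map_smul, LinearMap.smul_apply, hx w hw] } with hWpdef
  have hWpmem : ∀ u : H, u ∈ Wp ↔ ∀ w, PH w = 0 → aX u w = 0 := fun u => Iff.rfl
  -- PH maps Wp injectively into VH
  let f : Wp →ₗ[ℝ] VH :=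
    LinearMap.codRestrict VH (PH.comp Wp.subtype) (fun u => hPHmem _)
  have hfinj : Function.Injective f := by
    rw [← LinearMap.ker_eq_bot]
    ext u
    simp only [LinearMap.mem_ker, Submodule.mem_bot]
    constructor
    · intro hu
      have h1 : PH u.1 = 0 := congrArg Subtype.val hu
      have h2 : aX u.1 u.1 = 0 := u.2 u.1 h1
      exact Subtype.ext (ext0 _ h2)
    · intro hu; rw [hu]; exact map_zero f
  haveI : FiniteDimensional ℝ Wp := FiniteDimensional.of_injective f hfinj
  have hle : Module.finrank ℝ Wp ≤ Module.finrank ℝ VH :=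
    LinearMap.finrank_le_finrank_of_injective hfinj
  -- Linv maps VH into Wp
  have hLmem : ∀ z ∈ VH, Linv z ∈ Wp := by
    intro z hz w hw
    rw [hLinv]
    have h1 : b (w - PH w) z = 0 := hPHproj w z hz
    rw [hw, sub_zero] at h1
    rw [hbsymm]; exact h1
  let L' : VH →ₗ[ℝ] Wp :=
    { toFun := fun z => ⟨Linv z.1, hLmem z.1 z.2⟩
      map_add' := by
        intro x y
        apply Subtype.ext
        apply ext_aX
        intro v
        simp [hLinv, map_add, LinearMap.add_apply]
      map_smul' := by
        intro c x
        apply Subtype.ext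
        apply ext_aX
        intro v
        simp [hLinv, map_smul, LinearMap.smul_apply] }
  have hL'inj : Function.Injective L' := by
    rw [← LinearMap.ker_eq_bot]
    ext z
    simp only [LinearMap.mem_ker, Submodule.mem_bot]
    constructor
    · intro hz
      have h1 : Linv z.1 = 0 := congrArg Subtype.val hz
      have h2 : b z.1 z.1 = 0 := by
        rw [← hLinv, h1]; simp
      exact Subtype.ext (ext0b _ h2)
    · intro hz
      rw [hz]
      apply Subtype.ext
      apply ext_aX
      intro v
      simp [hLinv]
  -- (I - C) maps VH into Wp
  have hCmem' : ∀ z ∈ VH, z - C z ∈ Wp := by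
    intro z hz w hw
    simp [map_sub, LinearMap.sub_apply, hC z w hw]
  have hCadd : ∀ x y : H, C (x + y) = C x + C y := by
    intro x y
    apply ext_W _ _ (hCmem _) (by simp [map_add, hCmem])
    intro w hw
    simp [map_add, LinearMap.add_apply, hC _ _ hw]
  have hCsmul : ∀ (c : ℝ) (x : H), C (c • x) = c • C x := by
    intro c x
    apply ext_W _ _ (hCmem _) (by simp [map_smul, hCmem])
    intro w hw
    simp [map_smul, LinearMap.smul_apply, hC _ _ hw]
  let C' : VH →ₗ[ℝ] Wp :=
    { toFun := fun z => ⟨z.1 - C z.1, hCmem' z.1 z.2⟩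
      map_add' := by
        intro x y
        apply Subtype.ext
        simp only [Submodule.coe_add]
        rw [hCadd]
        abel
      map_smul' := by
        intro c x
        apply Subtype.ext
        simp only [Submodule.coe_smul, RingHom.id_apply]
        rw [hCsmul]
        simp [smul_sub] }
  have hC'inj : Function.Injective C' := by
    rw [← LinearMap.ker_eq_bot]
    ext z
    simp only [LinearMap.mem_ker, Submodule.mem_bot]
    constructor
    · intro hz
      have h1 : z.1 - C z.1 = 0 := congrArg Subtype.val hz
      have h2 : z.1 = C z.1 := sub_eq_zero.mp h1
      have h3 : PH z.1 = 0 := by rw [h2]; exact hCmem _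
      have h4 : z.1 = 0 := by rw [← hPHid z.1 z.2, h3]
      exact Subtype.ext h4
    · intro hz
      rw [hz]
      apply Subtype.ext
      have hC0 : C (0 : H) = 0 := by
        apply ext_W _ _ (hCmem _) (map_zero PH)
        intro w hw
        simp [hC _ _ hw]
      simp [hC0]
  -- dimension count: both maps are surjective onto Wp
  have hge : Module.finrank ℝ VH ≤ Module.finrank ℝ Wp :=
    LinearMap.finrank_le_finrank_of_injective hL'inj
  have hrank : Module.finrank ℝ VH = Module.finrank ℝ Wp := le_antisymm hge hle
  have hsurj : ∀ (T : VH →ₗ[ℝ] Wp), Function.Injective T → Function.Surjective T := by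
    intro T hT
    have h1 : Module.finrank ℝ (LinearMap.range T) = Module.finrank ℝ Wp := by
      rw [LinearMap.finrank_range_of_inj hT, hrank]
    have h2 : LinearMap.range T = ⊤ := Submodule.eq_top_of_finrank_eq h1
    exact LinearMap.range_eq_top.mp h2
  have hL'surj := hsurj L' hL'inj
  have hC'surj := hsurj C' hC'inj
  -- conclude: both images equal Wp
  ext u
  simp only [Set.mem_image, SetLike.mem_coe]
  constructor
  · rintro ⟨z, hz, rfl⟩
    obtain ⟨x, hx⟩ := hC'surj ⟨Linv z, hLmem z hz⟩
    refine ⟨x.1, x.2, ?_⟩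
    exact congrArg Subtype.val hx
  · rintro ⟨z, hz, rfl⟩
    obtain ⟨x, hx⟩ := hL'surj ⟨z - C z, hCmem' z hz⟩
    refine ⟨x.1, x.2, ?_⟩
    exact congrArg Subtype.val hx
end

section
/- Under the same assumptions, the restriction of L⁻¹ ∘ P_H to V_H^L := L⁻¹(V_H) is injective, hence invertible as a linear map from V_H^L to V_H^L. -/
/-- Under the same assumptions as before (finite-dimensional subspace
`VH`, `L²`-projection `PH` onto `VH`, solution operator `Linv` of the symmetric
coercive energy form `aX`, with `V_H^L := Linv(VH)`), the restriction of
`Linv ∘ PH` to `V_H^L` maps `V_H^L` into itself and is injective there, hence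
invertible as a linear map from `V_H^L` to `V_H^L`. -/
theorem LinvPH_injective_on_VHL
    {H : Type*} [AddCommGroup H] [Module ℝ H]
    (aX b : LinearMap.BilinForm ℝ H)
    (haXsymm : ∀ u v : H, aX u v = aX v u)
    (hbsymm : ∀ u v : H, b u v = b v u)
    (haXpos : ∀ v : H, v ≠ 0 → 0 < aX v v)
    (hbpos : ∀ v : H, v ≠ 0 → 0 < b v v)
    (VH : Submodule ℝ H) [FiniteDimensional ℝ VH]
    (PH : H →ₗ[ℝ] H)
    (hPHmem : ∀ v : H, PH v ∈ VH)
    (hPHproj : ∀ v : H, ∀ vH ∈ VH, b (v - PH v) vH = 0)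
    (Linv : H → H)
    (hLinv : ∀ z v : H, aX (Linv z) v = b z v) :
    Set.MapsTo (fun v => Linv (PH v)) (Linv '' (VH : Set H)) (Linv '' (VH : Set H)) ∧
    Set.InjOn (fun v => Linv (PH v)) (Linv '' (VH : Set H)) := by
  -- Linv is injective
  have hLinj : ∀ z₁ z₂ : H, Linv z₁ = Linv z₂ → z₁ = z₂ := by
    intro z₁ z₂ h
    by_contra hne
    have hne' : z₁ - z₂ ≠ 0 := sub_ne_zero.mpr hne
    have := hbpos _ hne'
    have hz : b (z₁ - z₂) (z₁ - z₂) = 0 := by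
      have h1 : b z₁ (z₁ - z₂) = b z₂ (z₁ - z₂) := by
        rw [← hLinv z₁ (z₁ - z₂), ← hLinv z₂ (z₁ - z₂), h]
      rw [show b (z₁ - z₂) = b z₁ - b z₂ from map_sub b z₁ z₂, LinearMap.sub_apply, h1, sub_self]
    rw [hz] at this; exact lt_irrefl _ this
  constructor
  · rintro x ⟨p, hp, rfl⟩
    exact ⟨PH (Linv p), hPHmem _, rfl⟩
  · rintro x ⟨p, hp, rfl⟩ y ⟨q, hq, rfl⟩ hxy
    have hPH : PH (Linv p) = PH (Linv q) := hLinj _ _ hxy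
    set v := Linv p - Linv q with hv
    have hPHv : PH v = 0 := by rw [hv, map_sub, hPH, sub_self]
    -- b v vH = 0 for vH ∈ VH
    have hbv : ∀ vH ∈ VH, b v vH = 0 := by
      intro vH hvH
      have := hPHproj v vH hvH
      rwa [hPHv, sub_zero] at this
    -- aX v v = b (p - q) v
    have haXv : aX v v = b (p - q) v := by
      rw [hv]
      simp only [map_sub, LinearMap.sub_apply, hLinv]
    have hzero : aX v v = 0 := by
      rw [haXv, hbsymm]
      have := hbv (p - q) (sub_mem hp hq)
      simpa using this
    have hv0 : v = 0 := by
      by_contra hne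
      exact lt_irrefl 0 (hzero ▸ haXpos v hne)
    exact sub_eq_zero.mp hv0
end

section
/- (Coercivity of the spin-orbit operator L₀.) Let D ⊂ ℝ^d (d = 2,3) be a bounded Lipschitz domain, V₁, V₂ ∈ L^∞(D, ℝ_{≥0}) with V_j(x) − (|δ| + |Ω| + 2k₀²)/2 ≥ 0 a.e. for j = 1,2, and δ, Ω, k₀ ∈ ℝ. Define for v = (v₁, v₂), w = (w₁, w₂) ∈ H¹₀(D, ℂ²): ⟨L₀v, w⟩ = Re ∫_D Σ_{j=1,2} (½ ∇v_j·∇w̄_j + V_j v_j w̄_j) + (δ/2)(v₁w̄₁ − v₂w̄₂) + (Ω/2)(v₁w̄₂ + v₂w̄₁) + i k₀ (w̄₁ ∂₁v₁ − w̄₂ ∂₁v₂) dx. Then ⟨L₀v, v⟩ ≥ ¼ ‖∇v‖²_{L²(D)²} for all v ∈ H¹₀(D, ℂ²). -/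
open MeasureTheory

set_option maxHeartbeats 1000000 in
/-- Coercivity of the spin-orbit operator `L₀`: `D` is a (bounded
Lipschitz) domain in `ℝ^d`, `d = 2, 3`, modeled by a measure `μ` on `α`;
`v₁, v₂ : α → ℂ` are the components of `v ∈ H¹₀(D, ℂ²)` with gradients
`g₁, g₂ : α → (Fin d → ℂ)` (so `∂₁ v_j = g_j · e₁`). The trapping potentials satisfy
`V_j(x) − (|δ| + |Ω| + 2k₀²)/2 ≥ 0` a.e. Then
`⟨L₀ v, v⟩ = Re ∫ Σ_j (½|∇v_j|² + V_j |v_j|²) + (δ/2)(|v₁|² − |v₂|²) + Ω Re(v₁ v̄₂)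
 + i k₀ (v̄₁ ∂₁v₁ − v̄₂ ∂₁v₂) dx ≥ ¼ ∫ |∇v₁|² + |∇v₂|² dx`. -/
theorem spin_orbit_L0_coercive
    {α : Type*} [MeasurableSpace α] (μ : Measure α)
    {d : ℕ} (hd : 0 < d) (hdim : d = 2 ∨ d = 3)
    (V1 V2 : α → ℝ) (δ Ω k₀ : ℝ)
    (hV1 : ∀ᵐ x ∂μ, (|δ| + |Ω| + 2 * k₀ ^ 2) / 2 ≤ V1 x)
    (hV2 : ∀ᵐ x ∂μ, (|δ| + |Ω| + 2 * k₀ ^ 2) / 2 ≤ V2 x)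
    (v1 v2 : α → ℂ) (g1 g2 : α → Fin d → ℂ)
    (hint : Integrable (fun x =>
      (1 / 2) * ((∑ i, ‖g1 x i‖ ^ 2) + (∑ i, ‖g2 x i‖ ^ 2))
        + V1 x * ‖v1 x‖ ^ 2 + V2 x * ‖v2 x‖ ^ 2
        + (δ / 2) * (‖v1 x‖ ^ 2 - ‖v2 x‖ ^ 2)
        + Ω * (v1 x * starRingEnd ℂ (v2 x)).re
        + (Complex.I * (k₀ : ℂ) *
            (starRingEnd ℂ (v1 x) * g1 x ⟨0, hd⟩
              - starRingEnd ℂ (v2 x) * g2 x ⟨0, hd⟩)).re) μ)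
    (hgint : Integrable (fun x => (∑ i, ‖g1 x i‖ ^ 2) + (∑ i, ‖g2 x i‖ ^ 2)) μ)
    (hvint : Integrable (fun x => ‖v1 x‖ ^ 2 + ‖v2 x‖ ^ 2) μ)
    (hVvint : Integrable (fun x => V1 x * ‖v1 x‖ ^ 2 + V2 x * ‖v2 x‖ ^ 2) μ) :
    (1 / 4) * ∫ x, ((∑ i, ‖g1 x i‖ ^ 2) + (∑ i, ‖g2 x i‖ ^ 2)) ∂μ ≤
      ∫ x, ((1 / 2) * ((∑ i, ‖g1 x i‖ ^ 2) + (∑ i, ‖g2 x i‖ ^ 2))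
        + V1 x * ‖v1 x‖ ^ 2 + V2 x * ‖v2 x‖ ^ 2
        + (δ / 2) * (‖v1 x‖ ^ 2 - ‖v2 x‖ ^ 2)
        + Ω * (v1 x * starRingEnd ℂ (v2 x)).re
        + (Complex.I * (k₀ : ℂ) *
            (starRingEnd ℂ (v1 x) * g1 x ⟨0, hd⟩
              - starRingEnd ℂ (v2 x) * g2 x ⟨0, hd⟩)).re) ∂μ := by
  rw [← MeasureTheory.integral_const_mul]
  refine integral_mono_ae (hgint.const_mul _) hint ?_
  filter_upwards [hV1, hV2] with x h1 h2
  set A1 := ‖v1 x‖ with hA1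
  set A2 := ‖v2 x‖ with hA2
  set B1 := ‖g1 x ⟨0, hd⟩‖ with hB1
  set B2 := ‖g2 x ⟨0, hd⟩‖ with hB2
  have hB1sq : B1 ^ 2 ≤ ∑ i, ‖g1 x i‖ ^ 2 :=
    Finset.single_le_sum (fun i _ => sq_nonneg ‖g1 x i‖) (Finset.mem_univ _)
  have hB2sq : B2 ^ 2 ≤ ∑ i, ‖g2 x i‖ ^ 2 :=
    Finset.single_le_sum (fun i _ => sq_nonneg ‖g2 x i‖) (Finset.mem_univ _)
  have hR : |((Complex.I * (k₀ : ℂ) *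
      (starRingEnd ℂ (v1 x) * g1 x ⟨0, hd⟩ - starRingEnd ℂ (v2 x) * g2 x ⟨0, hd⟩)).re)|
      ≤ |k₀| * (A1 * B1 + A2 * B2) := by
    refine (Complex.abs_re_le_norm _).trans ?_
    rw [norm_mul, norm_mul, Complex.norm_I, Complex.norm_real,
      Real.norm_eq_abs, one_mul]
    refine mul_le_mul_of_nonneg_left ?_ (abs_nonneg _)
    refine (norm_sub_le _ _).trans ?_
    rw [norm_mul, norm_mul, RCLike.norm_conj, RCLike.norm_conj]
  have hR' : (Complex.I * (k₀ : ℂ) *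
      (starRingEnd ℂ (v1 x) * g1 x ⟨0, hd⟩ - starRingEnd ℂ (v2 x) * g2 x ⟨0, hd⟩)).re
      ≥ -(|k₀| * (A1 * B1 + A2 * B2)) := by
    have := neg_abs_le ((Complex.I * (k₀ : ℂ) *
      (starRingEnd ℂ (v1 x) * g1 x ⟨0, hd⟩ - starRingEnd ℂ (v2 x) * g2 x ⟨0, hd⟩)).re)
    linarith
  have hO : |((v1 x * starRingEnd ℂ (v2 x)).re)| ≤ A1 * A2 := by
    refine (Complex.abs_re_le_norm _).trans ?_
    rw [norm_mul, RCLike.norm_conj]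
  have hO' : Ω * (v1 x * starRingEnd ℂ (v2 x)).re ≥ -(|Ω| * (A1 * A2)) := by
    have h3 : |Ω * (v1 x * starRingEnd ℂ (v2 x)).re| ≤ |Ω| * (A1 * A2) := by
      rw [abs_mul]; exact mul_le_mul_of_nonneg_left hO (abs_nonneg _)
    linarith [neg_abs_le (Ω * (v1 x * starRingEnd ℂ (v2 x)).re)]
  have hd2 : -(|δ| * (A1 ^ 2 + A2 ^ 2)) ≤ δ * (A1 ^ 2 - A2 ^ 2) := by
    rcases abs_cases δ with ⟨h, _⟩ | ⟨h, _⟩ <;> nlinarith [sq_nonneg A1, sq_nonneg A2]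
  have hk1 : |k₀| * (A1 * B1) ≤ k₀ ^ 2 * A1 ^ 2 + (1/4) * B1 ^ 2 := by
    nlinarith [sq_nonneg (|k₀| * A1 - B1 / 2), sq_abs k₀]
  have hk2 : |k₀| * (A2 * B2) ≤ k₀ ^ 2 * A2 ^ 2 + (1/4) * B2 ^ 2 := by
    nlinarith [sq_nonneg (|k₀| * A2 - B2 / 2), sq_abs k₀]
  have hOm : |Ω| * (A1 * A2) ≤ |Ω| / 2 * A1 ^ 2 + |Ω| / 2 * A2 ^ 2 := by
    nlinarith [sq_nonneg (A1 - A2), abs_nonneg Ω]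
  have hV1' : (|δ| + |Ω| + 2 * k₀ ^ 2) / 2 * A1 ^ 2 ≤ V1 x * A1 ^ 2 :=
    mul_le_mul_of_nonneg_right h1 (sq_nonneg A1)
  have hV2' : (|δ| + |Ω| + 2 * k₀ ^ 2) / 2 * A2 ^ 2 ≤ V2 x * A2 ^ 2 :=
    mul_le_mul_of_nonneg_right h2 (sq_nonneg A2)
  linarith [hR', hk1, hk2, hd2, hO', hOm, hV1', hV2', hB1sq, hB2sq]
end

section
/- (A priori bound on the update step.) In the metric-driven iteration u_prel^{n+1} = (1−τ)uⁿ + τγ L_{uⁿ}⁻¹uⁿ with γ = (L_{uⁿ}⁻¹uⁿ, uⁿ)_{L²}^{-1} ≥ 0 and ‖uⁿ‖_{L²} = 1, the energy-norm of the increment satisfies ⟨L₀(u_prel^{n+1}−uⁿ), u_prel^{n+1}−uⁿ⟩ ≤ τ² ⟨L_{uⁿ}uⁿ, uⁿ⟩ ≤ 4τ² E(uⁿ). -/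
/-- A priori bound on the update step: In the metric-driven iteration
`u_prel = (1 − τ) • uⁿ + (τ γ) • L_{uⁿ}⁻¹ uⁿ` with `γ = (L_{uⁿ}⁻¹uⁿ, uⁿ)_{L²}⁻¹ ≥ 0`
and `‖uⁿ‖_{L²} = 1`, where `ℓ0 = ⟨L₀·,·⟩ ≤ ℓ = ⟨L_{uⁿ}·,·⟩` (nonnegative nonlinear
part) and `⟨L_{uⁿ} uⁿ, uⁿ⟩ ≤ 4 E(uⁿ)`, the energy norm of the increment satisfies
`⟨L₀(u_prel − uⁿ), u_prel − uⁿ⟩ ≤ τ² ⟨L_{uⁿ} uⁿ, uⁿ⟩ ≤ 4 τ² E(uⁿ)`. -/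
theorem update_step_apriori_bound
    {H : Type*} [AddCommGroup H] [Module ℝ H]
    (ℓ0 ℓ b : LinearMap.BilinForm ℝ H)
    (hℓsymm : ∀ v w : H, ℓ v w = ℓ w v)
    (hbsymm : ∀ v w : H, b v w = b w v)
    (hmono : ∀ v : H, ℓ0 v v ≤ ℓ v v)
    (un Li : H)
    (hun : b un un = 1)
    (hLi : ∀ v : H, ℓ Li v = b un v)
    (hγ : 0 ≤ (b Li un)⁻¹)
    (En : ℝ) (hEn : ℓ un un ≤ 4 * En)
    (τ : ℝ) (hτ : 0 < τ)
    (uprel : H)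
    (huprel : uprel = (1 - τ) • un + (τ * (b Li un)⁻¹) • Li) :
    ℓ0 (uprel - un) (uprel - un) ≤ τ ^ 2 * ℓ un un ∧
      τ ^ 2 * ℓ un un ≤ 4 * τ ^ 2 * En := by
  subst huprel
  set γ := (b Li un)⁻¹ with hγdef
  have key : ((1 - τ) • un + (τ * γ) • Li) - un = τ • (γ • Li - un) := by
    module
  rw [key]
  have hLiLi : ℓ Li Li = b Li un := by rw [hLi, hbsymm]
  have hLiun : ℓ Li un = 1 := by rw [hLi, hun]
  have hunLi : ℓ un Li = 1 := by rw [hℓsymm, hLiun]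
  have expand : ℓ (τ • (γ • Li - un)) (τ • (γ • Li - un))
      = τ ^ 2 * (γ ^ 2 * b Li un - 2 * γ + ℓ un un) := by
    simp only [map_sub, map_smul, LinearMap.sub_apply, LinearMap.smul_apply,
      smul_eq_mul, hLiLi, hLiun, hunLi]
    ring
  have hγb : γ ^ 2 * b Li un ≤ γ := by
    rcases eq_or_ne (b Li un) 0 with h | h
    · simp [hγdef, h]
    · have : γ ^ 2 * b Li un = γ := by
        rw [hγdef]; field_simp
      linarith
  constructor
  · have h1 := hmono (τ • (γ • Li - un))
    have h2 : ℓ (τ • (γ • Li - un)) (τ • (γ • Li - un)) ≤ τ ^ 2 * ℓ un un := by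
      rw [expand]
      have hτ2 : (0:ℝ) ≤ τ ^ 2 := sq_nonneg τ
      nlinarith
    linarith
  · nlinarith [sq_nonneg τ]
end
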